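/- For the sequence μ constructed in the paper (blocks where μ is multiplied by A > 2 on dyadic blocks (2^i a_j, 2^{i+1} a_j], and satisfies μ_k = 2^{1/(2·2^i b_j)} μ_{k−1} on dyadic blocks (2^i b_j, 2^{i+1} b_j]), one has sup_{k≥1} μ_{2k}/μ_k ≤ √2·A; consequently the sequence M with M_j = Π_{k≤j} μ_k has moderate growth. -/

import Mathlib

open Filter

/-- A weight function: non-decreasing on `[0,∞)`, non-negative, tending to `+∞`. -/
def IsWeight (ω : ℝ → ℝ) : Prop :=
  (∀ t, 0 ≤ ω t) ∧ MonotoneOn ω (Set.Ici (0 : ℝ)) ∧ Tendsto ω atTop atTop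

/-- Property `P(ω,γ)`: there is `K > 1` with `limsup_{t→∞} ω(K^γ t)/ω(t) < K`. -/
def PropP (ω : ℝ → ℝ) (γ : ℝ) : Prop :=
  ∃ K : ℝ, 1 < K ∧ limsup (fun t => ω (K ^ γ * t) / ω t) atTop < K

/-- The growth index `γ(ω) = sup {γ > 0 : P(ω,γ)} ∈ [0,∞]` (`0` if the set is empty). -/
noncomputable def gammaIdx (ω : ℝ → ℝ) : ENNReal :=
  ⨆ γ ∈ {γ : ℝ | 0 < γ ∧ PropP ω γ}, ENNReal.ofReal γ

section MuAuxAll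

variable {A : ℝ} {a b d : ℕ → ℕ} {μ : ℕ → ℝ}

lemma aux_a_one_le (ha1 : a 1 = 1)
    (hb : ∀ j ≥ 1, b j = 2 ^ (d j) * a j)
    (ha : ∀ j ≥ 1, a (j + 1) = 2 ^ j * b j) :
    ∀ j ≥ 1, 1 ≤ a j := by
  intro j hj
  induction j, hj using Nat.le_induction with
  | base => omega
  | succ n hn ih =>
    rw [ha n hn, hb n hn]
    have h1 : 1 ≤ 2 ^ n := Nat.one_le_two_pow
    have h2 : 1 ≤ 2 ^ (d n) := Nat.one_le_two_pow
    calc 1 = 1 * (1 * 1) := by ring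
    _ ≤ 2 ^ n * (2 ^ (d n) * a n) := by
        exact Nat.mul_le_mul h1 (Nat.mul_le_mul h2 ih)


lemma aux_b_one_le (ha1 : a 1 = 1)
    (hb : ∀ j ≥ 1, b j = 2 ^ (d j) * a j)
    (ha : ∀ j ≥ 1, a (j + 1) = 2 ^ j * b j) :
    ∀ j ≥ 1, 1 ≤ b j := by
  intro j hj
  rw [hb j hj]
  calc 1 = 1 * 1 := by ring
  _ ≤ 2 ^ (d j) * a j :=
      Nat.mul_le_mul Nat.one_le_two_pow (aux_a_one_le ha1 hb ha j hj)


lemma aux_d_one_le (hd : StrictMonoOn d (Set.Ici 1)) (hd1 : 1 ≤ d 1) :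
    ∀ j ≥ 1, 1 ≤ d j := by
  intro j hj
  rcases Nat.eq_or_lt_of_le hj with rfl | h
  · exact hd1
  · have := hd (by simp : (1:ℕ) ∈ Set.Ici 1) (by exact Set.mem_Ici.mpr hj) h
    omega

/-- `μ (2^i * a j) = A^i * μ (a j)` for `i ≤ d j`. -/

lemma aux_P1 (ha1 : a 1 = 1)
    (hb : ∀ j ≥ 1, b j = 2 ^ (d j) * a j)
    (ha : ∀ j ≥ 1, a (j + 1) = 2 ^ j * b j)
    (hblock1 : ∀ j ≥ 1, ∀ i < d j, ∀ k, 2 ^ i * a j < k → k ≤ 2 ^ (i + 1) * a j →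
      μ k = A ^ (i + 1) * μ (a j)) :
    ∀ j ≥ 1, ∀ i ≤ d j, μ (2 ^ i * a j) = A ^ i * μ (a j) := by
  intro j hj i hi
  match i with
  | 0 => simp
  | (i+1) =>
    have haj := aux_a_one_le ha1 hb ha j hj
    refine hblock1 j hj i (by omega) _ ?_ le_rfl
    have : 2 ^ i * a j < 2 ^ (i+1) * a j := by
      have : (2:ℕ) ^ i < 2 ^ (i+1) := by
        have := Nat.one_le_two_pow (n := i); rw [pow_succ]; omega
      exact Nat.mul_lt_mul_of_lt_of_le this le_rfl (by omega)
    exact this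


lemma aux_mub (ha1 : a 1 = 1)
    (hb : ∀ j ≥ 1, b j = 2 ^ (d j) * a j)
    (ha : ∀ j ≥ 1, a (j + 1) = 2 ^ j * b j)
    (hblock1 : ∀ j ≥ 1, ∀ i < d j, ∀ k, 2 ^ i * a j < k → k ≤ 2 ^ (i + 1) * a j →
      μ k = A ^ (i + 1) * μ (a j)) :
    ∀ j ≥ 1, μ (b j) = A ^ (d j) * μ (a j) := by
  intro j hj
  rw [hb j hj]
  exact aux_P1 ha1 hb ha hblock1 j hj (d j) le_rfl

/-- Closed form on the second-type blocks. -/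

lemma aux_P2 (ha1 : a 1 = 1)
    (hb : ∀ j ≥ 1, b j = 2 ^ (d j) * a j)
    (ha : ∀ j ≥ 1, a (j + 1) = 2 ^ j * b j)
    (hblock2 : ∀ j ≥ 1, ∀ i < j, ∀ k, 2 ^ i * b j < k → k ≤ 2 ^ (i + 1) * b j →
      μ k = (2 : ℝ) ^ ((1 : ℝ) / (2 * 2 ^ i * (b j : ℝ))) * μ (k - 1)) :
    ∀ j ≥ 1, ∀ i < j, ∀ n ≤ 2 ^ i * b j,
      μ (2 ^ i * b j + n)
        = (2 : ℝ) ^ ((n : ℝ) / (2 * 2 ^ i * (b j : ℝ))) * μ (2 ^ i * b j) := by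
  intro j hj i hi n hn
  induction n with
  | zero => simp
  | succ m ih =>
    have hbj := aux_b_one_le ha1 hb ha j hj
    have hD : (0:ℝ) < 2 * 2 ^ i * (b j : ℝ) := by positivity
    have hps : 2 ^ (i+1) * b j = 2 ^ i * b j + 2 ^ i * b j := by rw [pow_succ]; ring
    have key := hblock2 j hj i hi (2 ^ i * b j + (m + 1)) (by omega) (by omega)
    have hm : μ (2 ^ i * b j + m)
        = (2 : ℝ) ^ ((m : ℝ) / (2 * 2 ^ i * (b j : ℝ))) * μ (2 ^ i * b j) :=
      ih (by omega)
    have hsub : 2 ^ i * b j + (m + 1) - 1 = 2 ^ i * b j + m := by omega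
    rw [hsub, hm] at key
    rw [key, ← mul_assoc, ← Real.rpow_add two_pos]
    congr 2
    push_cast
    field_simp
    ring


lemma aux_P3 (ha1 : a 1 = 1)
    (hb : ∀ j ≥ 1, b j = 2 ^ (d j) * a j)
    (ha : ∀ j ≥ 1, a (j + 1) = 2 ^ j * b j)
    (hblock2 : ∀ j ≥ 1, ∀ i < j, ∀ k, 2 ^ i * b j < k → k ≤ 2 ^ (i + 1) * b j →
      μ k = (2 : ℝ) ^ ((1 : ℝ) / (2 * 2 ^ i * (b j : ℝ))) * μ (k - 1)) :
    ∀ j ≥ 1, ∀ i ≤ j, μ (2 ^ i * b j) = (2 : ℝ) ^ ((i : ℝ) / 2) * μ (b j) := by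
  intro j hj i hi
  induction i with
  | zero => simp
  | succ m ih =>
    have hbj := aux_b_one_le ha1 hb ha j hj
    have h1 : 2 ^ (m+1) * b j = 2 ^ m * b j + 2 ^ m * b j := by rw [pow_succ]; ring
    have h2 := aux_P2 ha1 hb ha hblock2 j hj m (by omega) (2 ^ m * b j) le_rfl
    rw [h1, h2, ih (by omega), ← mul_assoc, ← Real.rpow_add two_pos]
    congr 2
    have hD : (0:ℝ) < 2 ^ m * (b j : ℝ) := by positivity
    push_cast
    field_simp
    ring


lemma aux_P4 (ha1 : a 1 = 1)
    (hb : ∀ j ≥ 1, b j = 2 ^ (d j) * a j)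
    (ha : ∀ j ≥ 1, a (j + 1) = 2 ^ j * b j)
    (hblock1 : ∀ j ≥ 1, ∀ i < d j, ∀ k, 2 ^ i * a j < k → k ≤ 2 ^ (i + 1) * a j →
      μ k = A ^ (i + 1) * μ (a j))
    (hblock2 : ∀ j ≥ 1, ∀ i < j, ∀ k, 2 ^ i * b j < k → k ≤ 2 ^ (i + 1) * b j →
      μ k = (2 : ℝ) ^ ((1 : ℝ) / (2 * 2 ^ i * (b j : ℝ))) * μ (k - 1)) :
    ∀ j ≥ 1, μ (a (j+1)) = (2 : ℝ) ^ ((j : ℝ) / 2) * (A ^ (d j) * μ (a j)) := by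
  intro j hj
  rw [ha j hj, aux_P3 ha1 hb ha hblock2 j hj j le_rfl,
    aux_mub ha1 hb ha hblock1 j hj]


lemma aux_mua_pos (hA : 2 < A) (ha1 : a 1 = 1)
    (hb : ∀ j ≥ 1, b j = 2 ^ (d j) * a j)
    (ha : ∀ j ≥ 1, a (j + 1) = 2 ^ j * b j)
    (hμa1 : μ (a 1) = 2)
    (hblock1 : ∀ j ≥ 1, ∀ i < d j, ∀ k, 2 ^ i * a j < k → k ≤ 2 ^ (i + 1) * a j →
      μ k = A ^ (i + 1) * μ (a j))
    (hblock2 : ∀ j ≥ 1, ∀ i < j, ∀ k, 2 ^ i * b j < k → k ≤ 2 ^ (i + 1) * b j →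
      μ k = (2 : ℝ) ^ ((1 : ℝ) / (2 * 2 ^ i * (b j : ℝ))) * μ (k - 1)) :
    ∀ j ≥ 1, 0 < μ (a j) := by
  intro j hj
  induction j, hj using Nat.le_induction with
  | base => rw [hμa1]; norm_num
  | succ n hn ih =>
    rw [aux_P4 ha1 hb ha hblock1 hblock2 n hn]
    have hA0 : (0:ℝ) < A := by linarith
    positivity


lemma dyadic_loc (c : ℕ) :
    ∀ m, ∀ k, c < k → k ≤ 2 ^ m * c → ∃ i < m, 2 ^ i * c < k ∧ k ≤ 2 ^ (i+1) * c := by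
  intro m
  induction m with
  | zero => intro k h1 h2; simp at h2; omega
  | succ n ih =>
    intro k h1 h2
    by_cases hk : k ≤ 2 ^ n * c
    · obtain ⟨i, hi, hx, hy⟩ := ih k h1 hk
      exact ⟨i, by omega, hx, hy⟩
    · exact ⟨n, by omega, by omega, h2⟩


lemma aux_stage1 (ha1 : a 1 = 1)
    (hb : ∀ j ≥ 1, b j = 2 ^ (d j) * a j)
    (ha : ∀ j ≥ 1, a (j + 1) = 2 ^ j * b j)
    (h_a_le : ∀ j ≥ 1, 1 ≤ a j) :
    ∀ k ≥ 2, ∃ j ≥ 1, a j < k ∧ k ≤ a (j + 1) := by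
  intro k hk
  induction k, hk using Nat.le_induction with
  | base =>
    refine ⟨1, le_rfl, by omega, ?_⟩
    rw [ha 1 le_rfl, hb 1 le_rfl, ha1]
    have : 1 ≤ 2 ^ (d 1) := Nat.one_le_two_pow
    have : (2:ℕ) ^ 1 = 2 := by norm_num
    omega
  | succ n hn ih =>
    obtain ⟨j, hj, h1, h2⟩ := ih
    rcases Nat.lt_or_ge n (a (j+1)) with h | h
    · exact ⟨j, hj, by omega, by omega⟩
    · -- n = a (j+1)
      have hn' : n = a (j+1) := by omega
      refine ⟨j+1, by omega, by omega, ?_⟩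
      rw [ha (j+1) (by omega), hb (j+1) (by omega)]
      have e1 : 1 ≤ 2 ^ (j+1) := Nat.one_le_two_pow
      have e2 : 1 ≤ 2 ^ (d (j+1)) := Nat.one_le_two_pow
      have e3 : 1 ≤ a (j+1) := h_a_le (j+1) (by omega)
      have e4 : 2 ≤ 2 ^ (j+1) := by
        calc 2 = 2^1 := by norm_num
        _ ≤ 2 ^ (j+1) := Nat.pow_le_pow_right (by norm_num) (by omega)
      calc n + 1 ≤ 2 * a (j+1) := by omega
      _ ≤ 2 ^ (j+1) * (2 ^ (d (j+1)) * a (j+1)) := by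
          calc 2 * a (j+1) = 2 * (1 * a (j+1)) := by ring
          _ ≤ 2 ^ (j+1) * (2 ^ (d (j+1)) * a (j+1)) :=
            Nat.mul_le_mul e4 (Nat.mul_le_mul e2 le_rfl)


lemma aux_loc (ha1 : a 1 = 1)
    (hb : ∀ j ≥ 1, b j = 2 ^ (d j) * a j)
    (ha : ∀ j ≥ 1, a (j + 1) = 2 ^ j * b j)
    (h_a_le : ∀ j ≥ 1, 1 ≤ a j) :
    ∀ k ≥ 2,
      (∃ j ≥ 1, ∃ i < d j, 2 ^ i * a j < k ∧ k ≤ 2 ^ (i+1) * a j) ∨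
      (∃ j ≥ 1, ∃ i < j, 2 ^ i * b j < k ∧ k ≤ 2 ^ (i+1) * b j) := by
  intro k hk
  obtain ⟨j, hj, h1, h2⟩ := aux_stage1 ha1 hb ha h_a_le k hk
  by_cases hkb : k ≤ b j
  · left
    refine ⟨j, hj, ?_⟩
    have := dyadic_loc (a j) (d j) k h1 (by rw [← hb j hj]; exact hkb)
    exact this
  · right
    refine ⟨j, hj, ?_⟩
    have hbk : b j < k := by omega
    have := dyadic_loc (b j) j k hbk (by rw [← ha j hj]; exact h2)
    exact this


lemma aux_mu_pos (hA : 2 < A) (ha1 : a 1 = 1) (hμ0 : μ 0 = 1) (hμa1 : μ (a 1) = 2)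
    (hmuapos : ∀ j ≥ 1, 0 < μ (a j))
    (hloc : ∀ k ≥ 2,
      (∃ j ≥ 1, ∃ i < d j, 2 ^ i * a j < k ∧ k ≤ 2 ^ (i+1) * a j) ∨
      (∃ j ≥ 1, ∃ i < j, 2 ^ i * b j < k ∧ k ≤ 2 ^ (i+1) * b j))
    (hblock1 : ∀ j ≥ 1, ∀ i < d j, ∀ k, 2 ^ i * a j < k → k ≤ 2 ^ (i + 1) * a j →
      μ k = A ^ (i + 1) * μ (a j))
    (hblock2 : ∀ j ≥ 1, ∀ i < j, ∀ k, 2 ^ i * b j < k → k ≤ 2 ^ (i + 1) * b j →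
      μ k = (2 : ℝ) ^ ((1 : ℝ) / (2 * 2 ^ i * (b j : ℝ))) * μ (k - 1)) :
    ∀ k, 0 < μ k := by
  intro k
  induction k using Nat.strong_induction_on with
  | _ k ih =>
    match k with
    | 0 => rw [hμ0]; norm_num
    | 1 => rw [← ha1, hμa1]; norm_num
    | (m+2) =>
      rcases hloc (m+2) (by omega) with ⟨j, hj, i, hi, h1, h2⟩ | ⟨j, hj, i, hi, h1, h2⟩
      · rw [hblock1 j hj i hi _ h1 h2]
        have hA0 : (0:ℝ) < A := by linarith
        exact mul_pos (pow_pos hA0 _) (hmuapos j hj)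
      · rw [hblock2 j hj i hi _ h1 h2]
        exact mul_pos (Real.rpow_pos_of_pos two_pos _) (ih (m+2-1) (by omega))


lemma aux_mu_mono (hA : 2 < A) (ha1 : a 1 = 1) (hμ0 : μ 0 = 1) (hμa1 : μ (a 1) = 2)
    (hmuapos : ∀ j ≥ 1, 0 < μ (a j))
    (hmupos : ∀ k, 0 < μ k)
    (hP1 : ∀ j ≥ 1, ∀ i ≤ d j, μ (2 ^ i * a j) = A ^ i * μ (a j))
    (hloc : ∀ k ≥ 2,
      (∃ j ≥ 1, ∃ i < d j, 2 ^ i * a j < k ∧ k ≤ 2 ^ (i+1) * a j) ∨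
      (∃ j ≥ 1, ∃ i < j, 2 ^ i * b j < k ∧ k ≤ 2 ^ (i+1) * b j))
    (hblock1 : ∀ j ≥ 1, ∀ i < d j, ∀ k, 2 ^ i * a j < k → k ≤ 2 ^ (i + 1) * a j →
      μ k = A ^ (i + 1) * μ (a j))
    (hblock2 : ∀ j ≥ 1, ∀ i < j, ∀ k, 2 ^ i * b j < k → k ≤ 2 ^ (i + 1) * b j →
      μ k = (2 : ℝ) ^ ((1 : ℝ) / (2 * 2 ^ i * (b j : ℝ))) * μ (k - 1)) :
    Monotone μ := by
  apply monotone_nat_of_le_succ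
  intro k
  match k with
  | 0 =>
    have h1 : μ 1 = 2 := by rw [ha1] at hμa1; exact hμa1
    show μ 0 ≤ μ 1
    rw [hμ0, h1]; norm_num
  | (m+1) =>
    rcases hloc (m+2) (by omega) with ⟨j, hj, i, hi, h1, h2⟩ | ⟨j, hj, i, hi, h1, h2⟩
    · rw [hblock1 j hj i hi _ h1 h2]
      rcases Nat.lt_or_ge (2 ^ i * a j) (m+1) with h | h
      · rw [hblock1 j hj i hi (m+1) h (by omega)]
      · have he : m + 1 = 2 ^ i * a j := by omega
        rw [he, hP1 j hj i (le_of_lt hi)]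
        have hmu := hmuapos j hj
        have hA1 : (1:ℝ) ≤ A := by linarith
        have : A ^ i ≤ A ^ (i+1) := pow_le_pow_right₀ hA1 (by omega)
        nlinarith
    · rw [hblock2 j hj i hi _ h1 h2]
      have hstep : m + 2 - 1 = m + 1 := by omega
      rw [hstep]
      have h1r : (1:ℝ) ≤ (2:ℝ) ^ ((1 : ℝ) / (2 * 2 ^ i * (b j : ℝ))) := by
        rw [show (1:ℝ) = (2:ℝ) ^ (0:ℝ) from (Real.rpow_zero 2).symm]
        apply (Real.rpow_le_rpow_left_iff one_lt_two).2
        positivity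
      nlinarith [hmupos (m+1)]


lemma aux_part1 (hA : 2 < A) (ha1 : a 1 = 1)
    (ha : ∀ j ≥ 1, a (j + 1) = 2 ^ j * b j)
    (hb : ∀ j ≥ 1, b j = 2 ^ (d j) * a j)
    (hdle : ∀ j ≥ 1, 1 ≤ d j)
    (hble : ∀ j ≥ 1, 1 ≤ b j)
    (hmupos : ∀ k, 0 < μ k)
    (hmuapos : ∀ j ≥ 1, 0 < μ (a j))
    (hmub : ∀ j ≥ 1, μ (b j) = A ^ (d j) * μ (a j))
    (hP2 : ∀ j ≥ 1, ∀ i < j, ∀ n ≤ 2 ^ i * b j,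
      μ (2 ^ i * b j + n)
        = (2 : ℝ) ^ ((n : ℝ) / (2 * 2 ^ i * (b j : ℝ))) * μ (2 ^ i * b j))
    (hP3 : ∀ j ≥ 1, ∀ i ≤ j, μ (2 ^ i * b j) = (2 : ℝ) ^ ((i : ℝ) / 2) * μ (b j))
    (hloc : ∀ k ≥ 2,
      (∃ j ≥ 1, ∃ i < d j, 2 ^ i * a j < k ∧ k ≤ 2 ^ (i+1) * a j) ∨
      (∃ j ≥ 1, ∃ i < j, 2 ^ i * b j < k ∧ k ≤ 2 ^ (i+1) * b j))
    (hblock1 : ∀ j ≥ 1, ∀ i < d j, ∀ k, 2 ^ i * a j < k → k ≤ 2 ^ (i + 1) * a j →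
      μ k = A ^ (i + 1) * μ (a j)) :
    ∀ k ≥ 1, μ (2 * k) ≤ Real.sqrt 2 * A * μ k := by
  have hs2 : Real.sqrt 2 = (2:ℝ) ^ ((1:ℝ)/2) := Real.sqrt_eq_rpow 2
  have hs2ge : (1:ℝ) ≤ Real.sqrt 2 := by
    rw [hs2, show (1:ℝ) = (2:ℝ) ^ (0:ℝ) from (Real.rpow_zero 2).symm]
    exact Real.rpow_le_rpow_of_exponent_le (by norm_num) (by norm_num)
  have hA1 : (1:ℝ) ≤ A := by linarith
  have closer1 : ∀ k, μ (2 * k) = A * μ k → μ (2 * k) ≤ Real.sqrt 2 * A * μ k := by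
    intro k h
    rw [h, mul_assoc]
    exact le_mul_of_one_le_left (mul_nonneg (by linarith) (hmupos k).le) hs2ge
  have closer2 : ∀ k, μ (2 * k) ≤ Real.sqrt 2 * μ k → μ (2 * k) ≤ Real.sqrt 2 * A * μ k := by
    intro k h
    calc μ (2*k) ≤ Real.sqrt 2 * μ k := h
    _ ≤ Real.sqrt 2 * A * μ k := by
        rw [mul_assoc]
        exact mul_le_mul_of_nonneg_left (le_mul_of_one_le_left (hmupos k).le hA1)
          (Real.sqrt_nonneg 2)
  intro k hk
  rcases hloc (2*k) (by omega) with ⟨j, hj, i, hi, h1, h2⟩ | ⟨j, hj, i, hi, h1, h2⟩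
  · -- 2k in a first-type block
    have h2k := hblock1 j hj i hi _ h1 h2
    rcases Nat.eq_zero_or_pos i with rfl | hipos
    · -- i = 0
      have h2k' : μ (2*k) = A * μ (a j) := by rw [h2k]; norm_num
      have h1' : a j < 2 * k := by simpa using h1
      have h2'' : 2 * k ≤ 2 * a j := by
        have e : 2 ^ (0+1) * a j = 2 * a j := by norm_num
        omega
      rcases Nat.lt_or_ge k (a j) with hlt | hge
      · -- a j / 2 < k < a j
        have hj2 : 2 ≤ j := by
          by_contra hcon
          have hj1 : j = 1 := by omega
          rw [hj1, ha1] at hlt; omega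
        obtain ⟨q, rfl⟩ : ∃ q, j = q + 2 := ⟨j - 2, by omega⟩
        have hp1 : 1 ≤ q + 1 := by omega
        have haj : a (q+2) = 2 ^ (q+1) * b (q+1) := by
          have h := ha (q+1) hp1; exact h
        have e1 : 2 ^ (q+1) * b (q+1) = 2 * (2 ^ q * b (q+1)) := by rw [pow_succ]; ring
        have hk1 : 2 ^ q * b (q+1) < k := by omega
        have hk2 : k < 2 ^ (q+1) * b (q+1) := by omega
        set n : ℕ := k - 2 ^ q * b (q+1) with hn
        have hnle : n ≤ 2 ^ q * b (q+1) := by omega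
        have hkeq : k = 2 ^ q * b (q+1) + n := by omega
        have hμk : μ k = (2:ℝ) ^ ((n:ℝ) / (2 * 2 ^ q * (b (q+1) : ℝ)))
            * ((2:ℝ) ^ ((q:ℝ)/2) * μ (b (q+1))) := by
          rw [hkeq, hP2 (q+1) hp1 q (by omega) n hnle, hP3 (q+1) hp1 q (by omega)]
        have hμ2k : μ (2*k) = A * ((2:ℝ) ^ (((q:ℝ)+1)/2) * μ (b (q+1))) := by
          rw [h2k', haj, hP3 (q+1) hp1 (q+1) le_rfl]
          push_cast; ring_nf
        have hsplit : (2:ℝ) ^ (((q:ℝ)+1)/2) = (2:ℝ) ^ ((1:ℝ)/2) * (2:ℝ) ^ ((q:ℝ)/2) := by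
          rw [← Real.rpow_add two_pos]; ring_nf
        have hone : (1:ℝ) ≤ (2:ℝ) ^ ((n:ℝ) / (2 * 2 ^ q * (b (q+1) : ℝ))) := by
          rw [show (1:ℝ) = (2:ℝ) ^ (0:ℝ) from (Real.rpow_zero 2).symm]
          apply Real.rpow_le_rpow_of_exponent_le (by norm_num)
          positivity
        have hbpos : 0 < μ (b (q+1)) := by
          rw [hmub (q+1) hp1]
          exact mul_pos (pow_pos (by linarith) _) (hmuapos (q+1) hp1)
        have hqpos : (0:ℝ) < (2:ℝ) ^ ((q:ℝ)/2) := Real.rpow_pos_of_pos two_pos _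
        rw [hμ2k, hμk, hsplit, ← hs2]
        have h0 : (0:ℝ) ≤ Real.sqrt 2 * A * ((2:ℝ) ^ ((q:ℝ)/2) * μ (b (q+1)))
            * ((2:ℝ) ^ ((n:ℝ) / (2 * 2 ^ q * (b (q+1) : ℝ))) - 1) :=
          mul_nonneg (mul_nonneg (mul_nonneg (Real.sqrt_nonneg 2) (by linarith))
            (mul_pos hqpos hbpos).le) (by linarith)
        nlinarith [h0]
      · -- k = a j
        have hke : k = a j := by omega
        apply closer1
        rw [h2k', hke]
    · -- i = t + 1
      obtain ⟨t, rfl⟩ : ∃ t, i = t + 1 := ⟨i - 1, by omega⟩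
      have e1 : 2 ^ (t+1) * a j = 2 * (2 ^ t * a j) := by rw [pow_succ]; ring
      have e2 : 2 ^ (t+1+1) * a j = 2 * (2 ^ (t+1) * a j) := by rw [pow_succ 2 (t+1)]; ring
      have hk1 : 2 ^ t * a j < k := by omega
      have hk2 : k ≤ 2 ^ (t+1) * a j := by omega
      have hkval := hblock1 j hj t (by omega) k hk1 hk2
      apply closer1
      rw [h2k, hkval, pow_succ A (t+1)]
      ring
  · -- 2k in a second-type block
    have hbj : (0:ℝ) < (b j : ℝ) := by exact_mod_cast hble j hj
    rcases Nat.eq_zero_or_pos i with rfl | hipos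
    · -- i = 0 : b j < 2k ≤ 2 b j
      have h1' : b j < 2 * k := by simpa using h1
      have h2'' : 2 * k ≤ 2 * b j := by
        have e : 2 ^ (0+1) * b j = 2 * b j := by norm_num
        omega
      set n : ℕ := 2*k - b j with hn
      have hnle : n ≤ b j := by omega
      have hp2 := hP2 j hj 0 (by omega) n (by simpa using hnle)
      simp only [pow_zero, one_mul, mul_one] at hp2
      have h2keq : 2*k = b j + n := by omega
      have hμ2k : μ (2*k) = (2:ℝ) ^ ((n:ℝ) / (2 * (b j : ℝ))) * μ (b j) := by
        rw [h2keq, hp2]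
      have hexp : ((n:ℝ) / (2 * (b j : ℝ))) ≤ 1/2 := by
        rw [div_le_div_iff₀ (by positivity) (by norm_num)]
        have : (n:ℝ) ≤ (b j : ℝ) := by exact_mod_cast hnle
        nlinarith
      have hbpos : 0 < μ (b j) := by
        rw [hmub j hj]
        exact mul_pos (pow_pos (by linarith) _) (hmuapos j hj)
      have hle2k : μ (2*k) ≤ Real.sqrt 2 * μ (b j) := by
        rw [hμ2k, hs2]
        have h22 := Real.rpow_le_rpow_of_exponent_le (by norm_num : (1:ℝ) ≤ 2) hexp
        nlinarith
      rcases Nat.lt_or_ge k (b j) with hlt | hge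
      · have hd1 := hdle j hj
        obtain ⟨s, hs⟩ : ∃ s, d j = s + 1 := ⟨d j - 1, by omega⟩
        have ebj : b j = 2 ^ (s+1) * a j := by rw [hb j hj, hs]
        have e1 : 2 ^ (s+1) * a j = 2 * (2 ^ s * a j) := by rw [pow_succ]; ring
        have hk1 : 2 ^ s * a j < k := by omega
        have hk2 : k ≤ 2 ^ (s+1) * a j := by omega
        have hμk : μ k = μ (b j) := by
          rw [hblock1 j hj s (by omega) k hk1 hk2, hmub j hj, hs]
        apply closer2
        rw [hμk]
        exact hle2k
      · have hke : k = b j := by omega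
        apply closer2
        rw [hke] at hle2k ⊢
        exact hle2k
    · -- i = t+1
      obtain ⟨t, rfl⟩ : ∃ t, i = t + 1 := ⟨i - 1, by omega⟩
      have e1 : 2 ^ (t+1) * b j = 2 * (2 ^ t * b j) := by rw [pow_succ]; ring
      have e2 : 2 ^ (t+1+1) * b j = 2 * (2 ^ (t+1) * b j) := by rw [pow_succ 2 (t+1)]; ring
      have hk1 : 2 ^ t * b j < k := by omega
      have hk2 : k ≤ 2 ^ (t+1) * b j := by omega
      set m : ℕ := k - 2 ^ t * b j with hm
      have hmle : m ≤ 2 ^ t * b j := by omega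
      have hkeq : k = 2 ^ t * b j + m := by omega
      have h2keq : 2*k = 2 ^ (t+1) * b j + 2*m := by omega
      have hμk : μ k = (2:ℝ) ^ ((m:ℝ) / (2 * 2 ^ t * (b j : ℝ)))
          * ((2:ℝ) ^ ((t:ℝ)/2) * μ (b j)) := by
        rw [hkeq, hP2 j hj t (by omega) m hmle, hP3 j hj t (by omega)]
      have hμ2k : μ (2*k) = (2:ℝ) ^ (((2*m : ℕ):ℝ) / (2 * 2 ^ (t+1) * (b j : ℝ)))
          * ((2:ℝ) ^ (((t:ℝ)+1)/2) * μ (b j)) := by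
        rw [h2keq, hP2 j hj (t+1) hi (2*m) (by omega), hP3 j hj (t+1) (by omega)]
        push_cast; ring_nf
      have h2t : ((2:ℝ) ^ t) ≠ 0 := by positivity
      have hbj' : (b j : ℝ) ≠ 0 := ne_of_gt hbj
      have hexpeq : ((2*m : ℕ):ℝ) / (2 * 2 ^ (t+1) * (b j : ℝ))
          = (m:ℝ) / (2 * 2 ^ t * (b j : ℝ)) := by
        push_cast
        rw [pow_succ]
        field_simp
      have hsplit : (2:ℝ) ^ (((t:ℝ)+1)/2) = (2:ℝ) ^ ((1:ℝ)/2) * (2:ℝ) ^ ((t:ℝ)/2) := by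
        rw [← Real.rpow_add two_pos]; ring_nf
      apply closer2
      rw [hμ2k, hexpeq, hsplit, hμk, ← hs2]
      exact le_of_eq (by ring)


lemma aux_moderate (μ : ℕ → ℝ) (B : ℝ) (hB : 1 ≤ B) (hμ0 : μ 0 = 1)
    (hpos : ∀ k, 0 < μ k) (hmono : Monotone μ)
    (hdbl : ∀ k ≥ 1, μ (2*k) ≤ B * μ k) :
    ∀ j k : ℕ,
      (∏ i ∈ Finset.range (j + k + 1), μ i) ≤
        B ^ (j + k + 1) * (∏ i ∈ Finset.range (j + 1), μ i) *
          (∏ i ∈ Finset.range (k + 1), μ i) := by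
  set M : ℕ → ℝ := fun n => ∏ i ∈ Finset.range (n+1), μ i with hM
  have hMpos : ∀ n, 0 < M n := fun n => Finset.prod_pos (fun i _ => hpos i)
  have hMsucc : ∀ n, M (n+1) = M n * μ (n+1) := fun n => Finset.prod_range_succ μ (n+1)
  have hdbl' : ∀ k, μ (2*k) ≤ B * μ k := by
    intro k
    match k with
    | 0 => simpa [hμ0] using hB
    | (m+1) => exact hdbl (m+1) (by omega)
  have hB0 : (0:ℝ) < B := by linarith
  -- doubling for M
  have hMdbl : ∀ n, M (2*n) ≤ B ^ (2*n) * (M n)^2 := by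
    intro n
    induction n with
    | zero => simp [hM, hμ0]
    | succ n ih =>
      have e1 : 2*(n+1) = (2*n+1)+1 := by ring
      have eM : M (2*(n+1)) = M (2*n) * μ (2*n+1) * μ (2*n+2) := by
        rw [e1, hMsucc (2*n+1), hMsucc (2*n)]
      have h2 : μ (2*n+2) ≤ B * μ (n+1) := by
        have := hdbl' (n+1)
        rwa [show 2*(n+1) = 2*n+2 from by ring] at this
      have h1 : μ (2*n+1) ≤ B * μ (n+1) :=
        le_trans (hmono (by omega : 2*n+1 ≤ 2*n+2)) h2
      have hμp1 : (0:ℝ) < μ (2*n+1) := hpos _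
      have hμp2 : (0:ℝ) < μ (2*n+2) := hpos _
      have hMn : (0:ℝ) < M n := hMpos n
      calc M (2*(n+1)) = M (2*n) * (μ (2*n+1) * μ (2*n+2)) := by rw [eM]; ring
      _ ≤ (B ^ (2*n) * (M n)^2) * (μ (2*n+1) * μ (2*n+2)) := by
          apply mul_le_mul_of_nonneg_right ih
          positivity
      _ ≤ (B ^ (2*n) * (M n)^2) * ((B * μ (n+1)) * (B * μ (n+1))) := by
          apply mul_le_mul_of_nonneg_left _ (by positivity)
          exact mul_le_mul h1 h2 hμp2.le (mul_nonneg hB0.le (hpos _).le)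
      _ = B ^ (2*(n+1)) * (M (n+1))^2 := by
          rw [hMsucc n, show 2*(n+1) = 2*n+2 from by ring, pow_succ, pow_succ]
          ring
  -- midpoint inequality for M
  have hMmid : ∀ j t, (M (2*j+t))^2 ≤ M (2*j) * M (2*(j+t)) := by
    intro j t
    induction t with
    | zero => rw [show 2*j+0 = 2*j from rfl, show 2*(j+0) = 2*j from rfl, pow_two]
    | succ t ih =>
      have e1 : 2*(j+(t+1)) = 2*(j+t)+1+1 := by ring
      have e2 : 2*j+(t+1) = (2*j+t)+1 := by ring
      have hm1 : μ (2*j+t+1) ≤ μ (2*(j+t)+1) := hmono (by omega)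
      have hm2 : μ (2*j+t+1) ≤ μ (2*(j+t)+1+1) := hmono (by omega)
      have p1 : (0:ℝ) < μ (2*j+t+1) := hpos _
      have p2 : (0:ℝ) < μ (2*(j+t)+1) := hpos _
      have p3 : (0:ℝ) < μ (2*(j+t)+1+1) := hpos _
      have pM : (0:ℝ) < M (2*j) := hMpos _
      have pM2 : (0:ℝ) < M (2*(j+t)) := hMpos _
      calc (M (2*j+(t+1)))^2 = (M (2*j+t))^2 * (μ (2*j+t+1))^2 := by
            rw [e2, hMsucc (2*j+t)]; ring
      _ ≤ (M (2*j) * M (2*(j+t))) * (μ (2*j+t+1))^2 := by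
            apply mul_le_mul_of_nonneg_right ih (by positivity)
      _ ≤ (M (2*j) * M (2*(j+t))) * (μ (2*(j+t)+1) * μ (2*(j+t)+1+1)) := by
            apply mul_le_mul_of_nonneg_left _ (by positivity)
            rw [pow_two]
            exact mul_le_mul hm1 hm2 p1.le p2.le
      _ = M (2*j) * M (2*(j+(t+1))) := by
            rw [e1, hMsucc (2*(j+t)+1), hMsucc (2*(j+t))]
            ring
  -- main estimate for j ≤ k
  have main : ∀ j t : ℕ, M (j + (j+t)) ≤ B ^ (j + (j+t) + 1) * M j * M (j+t) := by
    intro j t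
    have e : j + (j+t) = 2*j + t := by ring
    have h1 : (M (j+(j+t)))^2 ≤ M (2*j) * M (2*(j+t)) := by rw [e]; exact hMmid j t
    have h2 : M (2*j) * M (2*(j+t)) ≤ (B ^ (2*j) * (M j)^2) * (B ^ (2*(j+t)) * (M (j+t))^2) :=
      mul_le_mul (hMdbl j) (hMdbl (j+t)) (hMpos _).le (mul_nonneg (pow_nonneg hB0.le _) (sq_nonneg _))
    have h3 : (B ^ (2*j) * (M j)^2) * (B ^ (2*(j+t)) * (M (j+t))^2)
        = (B ^ (j+(j+t)) * M j * M (j+t))^2 := by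
      rw [show 2*j = j+j from by ring, show 2*(j+t) = (j+t)+(j+t) from by ring,
        pow_add, pow_add, pow_add]
      ring
    have h4 : (M (j+(j+t)))^2 ≤ (B ^ (j+(j+t)) * M j * M (j+t))^2 := by
      calc (M (j+(j+t)))^2 ≤ M (2*j) * M (2*(j+t)) := h1
      _ ≤ _ := h2
      _ = _ := h3
    have h5 : M (j+(j+t)) ≤ B ^ (j+(j+t)) * M j * M (j+t) := by
      have hrhs : (0:ℝ) ≤ B ^ (j+(j+t)) * M j * M (j+t) :=
        mul_nonneg (mul_nonneg (pow_nonneg hB0.le _) (hMpos _).le) (hMpos _).le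
      exact (pow_le_pow_iff_left₀ (hMpos _).le hrhs (two_ne_zero)).1 h4
    calc M (j+(j+t)) ≤ B ^ (j+(j+t)) * M j * M (j+t) := h5
    _ ≤ B ^ (j+(j+t)+1) * M j * M (j+t) := by
        apply mul_le_mul_of_nonneg_right _ (hMpos _).le
        apply mul_le_mul_of_nonneg_right _ (hMpos _).le
        exact pow_le_pow_right₀ hB (by omega)
  intro j k
  rcases le_total j k with hjk | hkj
  · obtain ⟨t, rfl⟩ := Nat.exists_eq_add_of_le hjk
    exact main j t
  · obtain ⟨t, rfl⟩ := Nat.exists_eq_add_of_le hkj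
    have := main k t
    calc M (k+t+k) = M (k+(k+t)) := by rw [show k+t+k = k+(k+t) from by ring]
    _ ≤ B ^ (k+(k+t)+1) * M k * M (k+t) := this
    _ = B ^ (k+t+k+1) * M (k+t) * M k := by
        rw [show k+(k+t)+1 = k+t+k+1 from by ring]
        ring

end MuAuxAll

theorem mu_moderate_growth
(A : ℝ) (hA : 2 < A)
    (a b d : ℕ → ℕ) (μ : ℕ → ℝ)
    (hd : StrictMonoOn d (Set.Ici 1)) (hd1 : 1 ≤ d 1)
    (hdgrow : ∀ j ≥ 1, (2 / A) ^ (d j) ≤ 1 / (2 : ℝ) ^ ((j : ℝ) / 2 + 1))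
    (ha1 : a 1 = 1)
    (hb : ∀ j ≥ 1, b j = 2 ^ (d j) * a j)
    (ha : ∀ j ≥ 1, a (j + 1) = 2 ^ j * b j)
    (hμa1 : μ (a 1) = 2)
    (hblock1 : ∀ j ≥ 1, ∀ i < d j, ∀ k, 2 ^ i * a j < k → k ≤ 2 ^ (i + 1) * a j →
      μ k = A ^ (i + 1) * μ (a j))
    (hblock2 : ∀ j ≥ 1, ∀ i < j, ∀ k, 2 ^ i * b j < k → k ≤ 2 ^ (i + 1) * b j →
      μ k = (2 : ℝ) ^ ((1 : ℝ) / (2 * 2 ^ i * (b j : ℝ))) * μ (k - 1))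
    (hμ0 : μ 0 = 1) :
    (∀ k ≥ 1, μ (2 * k) / μ k ≤ Real.sqrt 2 * A) ∧
    (∃ C ≥ (1 : ℝ), ∀ j k : ℕ,
      (∏ i ∈ Finset.range (j + k + 1), μ i) ≤
        C ^ (j + k + 1) * (∏ i ∈ Finset.range (j + 1), μ i) *
          (∏ i ∈ Finset.range (k + 1), μ i)) := by
  have hdle := aux_d_one_le hd hd1
  have hale := aux_a_one_le ha1 hb ha
  have hble := aux_b_one_le ha1 hb ha
  have hP1 := aux_P1 ha1 hb ha hblock1
  have hmub := aux_mub ha1 hb ha hblock1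
  have hP2 := aux_P2 ha1 hb ha hblock2
  have hP3 := aux_P3 ha1 hb ha hblock2
  have hmuapos := aux_mua_pos hA ha1 hb ha hμa1 hblock1 hblock2
  have hloc := aux_loc ha1 hb ha hale
  have hmupos := aux_mu_pos hA ha1 hμ0 hμa1 hmuapos hloc hblock1 hblock2
  have hmono := aux_mu_mono hA ha1 hμ0 hμa1 hmuapos hmupos hP1 hloc hblock1 hblock2
  have hpart1 := aux_part1 hA ha1 ha hb hdle hble hmupos hmuapos hmub hP2 hP3 hloc hblock1
  have hs2ge : (1:ℝ) ≤ Real.sqrt 2 := by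
    rw [show (1:ℝ) = Real.sqrt 1 from Real.sqrt_one.symm]
    exact Real.sqrt_le_sqrt (by norm_num)
  have hB1 : (1:ℝ) ≤ Real.sqrt 2 * A := by nlinarith
  constructor
  · intro k hk
    rw [div_le_iff₀ (hmupos k)]
    exact hpart1 k hk
  · exact ⟨Real.sqrt 2 * A, hB1,
      aux_moderate μ (Real.sqrt 2 * A) hB1 hμ0 hmupos hmono hpart1⟩
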